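/- Let C ≥ 0 and let f : [0,∞) → ℝ be measurable with 0 ≤ f(x) ≤ C for all x, and set g(x) = e^{−x} f(x). Then for every L ≥ 0 one has ∑_{k=1}^∞ (T^k g)(L) ≤ 2 e C L, where e is Euler's number. -/

import Mathlib

open MeasureTheory Real

/-- The kernel operator `(Tg)(x) = ∫₀ˣ (e^{−y} + e^{−(x−y)}) g(y) dy`. -/
noncomputable def T (g : ℝ → ℝ) : ℝ → ℝ :=
  fun x => ∫ y in (0:ℝ)..x, (Real.exp (-y) + Real.exp (-(x - y))) * g y

/-- Measurable with exponential growth bound. -/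
def Nice (w : ℝ → ℝ) : Prop :=
  Measurable w ∧ ∃ c : ℝ, 0 ≤ c ∧ ∀ y : ℝ, |w y| ≤ c * Real.exp (c * |y|)

lemma nice_mul_II {w : ℝ → ℝ} (hw : Nice w) {φ : ℝ → ℝ} (hφ : Continuous φ) (a b : ℝ) :
    IntervalIntegrable (fun y => φ y * w y) volume a b := by
  obtain ⟨hm, c, hc0, hc⟩ := hw
  rw [intervalIntegrable_iff]
  obtain ⟨z, hz, hz2⟩ := isCompact_uIcc.exists_isMaxOn ⟨a, Set.left_mem_uIcc⟩
    (hφ.abs.continuousOn (s := Set.uIcc a b))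
  apply MeasureTheory.Integrable.mono'
    (g := fun _ => |φ z| * (c * Real.exp (c * (|a| + |b|))))
  · exact integrableOn_const measure_Ioc_lt_top.ne
  · exact (hφ.measurable.mul hm).aestronglyMeasurable
  · filter_upwards [ae_restrict_mem measurableSet_uIoc] with y hy
    have hy' : y ∈ Set.uIcc a b := Set.uIoc_subset_uIcc hy
    have h1 : |φ y| ≤ |φ z| := hz2 hy'
    have hyab : |y| ≤ |a| + |b| := by
      rcases Set.mem_uIcc.1 hy' with ⟨h1, h2⟩ | ⟨h1, h2⟩ <;>
      · rw [abs_le]; constructor <;> nlinarith [le_abs_self a, le_abs_self b,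
          neg_abs_le a, neg_abs_le b]
    have h2 : |w y| ≤ c * Real.exp (c * (|a| + |b|)) := by
      refine (hc y).trans ?_
      have := Real.exp_le_exp.2 (mul_le_mul_of_nonneg_left hyab hc0)
      nlinarith
    calc ‖φ y * w y‖ = |φ y| * |w y| := abs_mul _ _
      _ ≤ |φ z| * (c * Real.exp (c * (|a| + |b|))) :=
          mul_le_mul h1 h2 (abs_nonneg _) (abs_nonneg _)

lemma ker_cont (x : ℝ) : Continuous (fun y : ℝ => Real.exp (-y) + Real.exp (-(x - y))) := by
  continuity

lemma ker_int {w : ℝ → ℝ} (hw : Nice w) (x : ℝ) :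
    IntervalIntegrable (fun y => (Real.exp (-y) + Real.exp (-(x - y))) * w y) volume 0 x :=
  nice_mul_II hw (ker_cont x) 0 x

lemma T_rep {w : ℝ → ℝ} (hw : Nice w) :
    T w = fun x => (∫ y in (0:ℝ)..x, Real.exp (-y) * w y)
      + Real.exp (-x) * ∫ y in (0:ℝ)..x, Real.exp y * w y := by
  funext x
  unfold T
  rw [← intervalIntegral.integral_const_mul,
    ← intervalIntegral.integral_add (nice_mul_II hw (by continuity) 0 x)
      ((nice_mul_II hw Real.continuous_exp 0 x).const_mul _)]
  congr 1; funext y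
  have h : Real.exp (-(x - y)) = Real.exp (-x) * Real.exp y := by
    rw [← Real.exp_add]; ring_nf
  rw [h]; ring

lemma T_cont {w : ℝ → ℝ} (hw : Nice w) : Continuous (T w) := by
  rw [T_rep hw]
  exact (intervalIntegral.continuous_primitive
      (fun a b => nice_mul_II hw (by continuity) a b) 0).add
    ((Real.continuous_exp.comp continuous_neg).mul
      (intervalIntegral.continuous_primitive (fun a b => nice_mul_II hw Real.continuous_exp a b) 0))

lemma T_nice {w : ℝ → ℝ} (hw : Nice w) : Nice (T w) := by
  obtain ⟨hm, c, hc0, hc⟩ := hw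
  refine ⟨(T_cont ⟨hm, c, hc0, hc⟩).measurable, 3 * c + 3, by linarith, fun x => ?_⟩
  have hb : ∀ y ∈ Set.uIoc 0 x,
      ‖(Real.exp (-y) + Real.exp (-(x - y))) * w y‖ ≤ 2 * c * Real.exp ((c + 2) * |x|) := by
    intro y hy
    have hy' : |y| ≤ |x| := by
      rcases Set.mem_uIoc.1 hy with ⟨h1, h2⟩ | ⟨h1, h2⟩ <;> rw [abs_le] <;>
        constructor <;> nlinarith [le_abs_self x, neg_abs_le x]
    have hk1 : Real.exp (-y) ≤ Real.exp |x| :=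
      Real.exp_le_exp.2 (by nlinarith [neg_abs_le y, le_abs_self y])
    have hk2 : Real.exp (-(x - y)) ≤ Real.exp (2 * |x|) :=
      Real.exp_le_exp.2 (by nlinarith [le_abs_self y, neg_abs_le x])
    have hwy : |w y| ≤ c * Real.exp (c * |x|) :=
      (hc y).trans (by
        have := Real.exp_le_exp.2 (mul_le_mul_of_nonneg_left hy' hc0); nlinarith)
    have hker : |Real.exp (-y) + Real.exp (-(x - y))| ≤ 2 * Real.exp (2 * |x|) := by
      rw [abs_of_pos (by positivity)]
      have : Real.exp |x| ≤ Real.exp (2 * |x|) :=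
        Real.exp_le_exp.2 (by nlinarith [abs_nonneg x])
      linarith
    calc ‖(Real.exp (-y) + Real.exp (-(x - y))) * w y‖
        = |Real.exp (-y) + Real.exp (-(x - y))| * |w y| := abs_mul _ _
      _ ≤ (2 * Real.exp (2 * |x|)) * (c * Real.exp (c * |x|)) :=
          mul_le_mul hker hwy (abs_nonneg _) (by positivity)
      _ = 2 * c * Real.exp ((c + 2) * |x|) := by
          rw [show (c + 2) * |x| = 2 * |x| + c * |x| by ring, Real.exp_add]; ring
  have := intervalIntegral.norm_integral_le_of_norm_le_const hb
  simp only [sub_zero] at this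
  calc |T w x| ≤ 2 * c * Real.exp ((c + 2) * |x|) * |x| := this
    _ ≤ (3 * c + 3) * Real.exp ((3 * c + 3) * |x|) := by
        have h1 : |x| ≤ Real.exp |x| := (le_add_of_nonneg_left zero_le_one).trans
          (by linarith [Real.add_one_le_exp |x|])
        have h2 : Real.exp ((c + 2) * |x|) * Real.exp |x| = Real.exp ((c + 3) * |x|) := by
          rw [← Real.exp_add]; congr 1; ring
        have h3 : Real.exp ((c + 3) * |x|) ≤ Real.exp ((3 * c + 3) * |x|) :=
          Real.exp_le_exp.2 (by nlinarith [abs_nonneg x])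
        nlinarith [Real.exp_pos ((c + 2) * |x|), Real.exp_pos ((c + 3) * |x|),
          mul_le_mul_of_nonneg_left h1 (by positivity : (0:ℝ) ≤ 2 * c * Real.exp ((c + 2) * |x|))]

lemma T_nonneg {w : ℝ → ℝ} {x : ℝ} (hx : 0 ≤ x) (h : ∀ y ∈ Set.Icc (0:ℝ) x, 0 ≤ w y) :
    0 ≤ T w x :=
  intervalIntegral.integral_nonneg hx fun y hy =>
    mul_nonneg (by positivity) (h y hy)

lemma T_mono {v w : ℝ → ℝ} {x : ℝ} (hx : 0 ≤ x)
    (hv : IntervalIntegrable (fun y => (Real.exp (-y) + Real.exp (-(x - y))) * v y) volume 0 x)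
    (hw : IntervalIntegrable (fun y => (Real.exp (-y) + Real.exp (-(x - y))) * w y) volume 0 x)
    (h : ∀ y ∈ Set.Icc (0:ℝ) x, v y ≤ w y) : T v x ≤ T w x :=
  intervalIntegral.integral_mono_on hx hv hw fun y hy =>
    mul_le_mul_of_nonneg_left (h y hy) (by positivity)

lemma nice_add {v w : ℝ → ℝ} (hv : Nice v) (hw : Nice w) : Nice (fun y => v y + w y) := by
  obtain ⟨hmv, c, hc0, hc⟩ := hv
  obtain ⟨hmw, d, hd0, hd⟩ := hw
  refine ⟨hmv.add hmw, c + d, by linarith, fun y => ?_⟩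
  have h1 : Real.exp (c * |y|) ≤ Real.exp ((c + d) * |y|) :=
    Real.exp_le_exp.2 (by nlinarith [abs_nonneg y])
  have h2 : Real.exp (d * |y|) ≤ Real.exp ((c + d) * |y|) :=
    Real.exp_le_exp.2 (by nlinarith [abs_nonneg y])
  calc |v y + w y| ≤ |v y| + |w y| := abs_add_le _ _
    _ ≤ c * Real.exp (c * |y|) + d * Real.exp (d * |y|) := add_le_add (hc y) (hd y)
    _ ≤ (c + d) * Real.exp ((c + d) * |y|) := by nlinarith

lemma nice_zero : Nice (fun _ : ℝ => 0) :=
  ⟨measurable_const, 0, le_refl _, fun y => by simp⟩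

lemma nice_sum {v : ℕ → ℝ → ℝ} (h : ∀ k, Nice (v k)) (n : ℕ) :
    Nice (fun y => ∑ k ∈ Finset.range n, v k y) := by
  induction n with
  | zero => simpa using nice_zero
  | succ n ih =>
      simp only [Finset.sum_range_succ]
      exact nice_add ih (h n)

lemma T_sum {v : ℕ → ℝ → ℝ} (hv : ∀ k, Nice (v k)) (n : ℕ) (x : ℝ) :
    T (fun y => ∑ k ∈ Finset.range n, v k y) x = ∑ k ∈ Finset.range n, T (v k) x := by
  unfold T
  rw [← intervalIntegral.integral_finset_sum (fun k _ => ker_int (hv k) x)]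
  congr 1; funext y; rw [Finset.mul_sum]

lemma key_ineq (C : ℝ) (hC : 0 ≤ C) {x : ℝ} (hx : 0 ≤ x) :
    T (fun y => C * Real.exp (-y) + C * (4 * y - 2 * y * Real.exp (-y))) x
      ≤ C * (4 * x - 2 * x * Real.exp (-x)) := by
  have hder : ∀ t ∈ Set.uIcc (0:ℝ) x,
      HasDerivAt (fun s => C * ((s * Real.exp (-s) ^ 2 - 4 * (s + 1) * Real.exp (-s))
          + Real.exp (-x) * (s + 4 * (s - 1) * Real.exp s - s ^ 2)))
        ((Real.exp (-t) + Real.exp (-(x - t)))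
          * (C * Real.exp (-t) + C * (4 * t - 2 * t * Real.exp (-t)))) t := by
    intro t _
    have E : HasDerivAt (fun s : ℝ => Real.exp (-s)) (Real.exp (-t) * -1) t :=
      (hasDerivAt_neg t).exp
    have Eid : HasDerivAt (fun s : ℝ => Real.exp s) (Real.exp t) t := Real.hasDerivAt_exp t
    have h1 := (hasDerivAt_id t).mul (E.pow 2)
    have h2 := (((hasDerivAt_id t).add_const 1).const_mul 4).mul E
    have h3 := ((hasDerivAt_id t).add
      ((((hasDerivAt_id t).sub_const 1).const_mul 4).mul Eid)).sub (hasDerivAt_pow 2 t)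
    have H' := ((h1.sub h2).add (h3.const_mul (Real.exp (-x)))).const_mul C
    convert H' using 1
    case e'_4 => rfl
    case e'_5 => rfl
    case e'_8 => rfl
    have hxy : Real.exp (-(x - t)) = Real.exp (-x) * Real.exp t := by
      rw [← Real.exp_add]; ring_nf
    have hAB : Real.exp (-t) * Real.exp t = 1 := by
      rw [← Real.exp_add]; simp
    rw [hxy]
    simp only [id_eq, Pi.pow_apply]
    linear_combination (C * Real.exp (-x) * (1 - 2 * t)) * hAB
  have hcont : Continuous (fun y => (Real.exp (-y) + Real.exp (-(x - y)))
      * (C * Real.exp (-y) + C * (4 * y - 2 * y * Real.exp (-y)))) := by continuity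
  have hFTC := intervalIntegral.integral_eq_sub_of_hasDerivAt hder
    (hcont.intervalIntegrable 0 x)
  have hTx : T (fun y => C * Real.exp (-y) + C * (4 * y - 2 * y * Real.exp (-y))) x
      = C * ((x * Real.exp (-x) ^ 2 - 4 * (x + 1) * Real.exp (-x))
          + Real.exp (-x) * (x + 4 * (x - 1) * Real.exp x - x ^ 2))
        - C * ((0 * Real.exp (-0) ^ 2 - 4 * (0 + 1) * Real.exp (-0))
          + Real.exp (-x) * (0 + 4 * (0 - 1) * Real.exp 0 - 0 ^ 2)) := by
    unfold T; exact hFTC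
  rw [hTx]
  have hAB : Real.exp (-x) * Real.exp x = 1 := by rw [← Real.exp_add]; simp
  have hA1 : Real.exp (-x) ≤ 1 := Real.exp_le_one_iff.2 (by linarith)
  have hA0 : 0 < Real.exp (-x) := Real.exp_pos _
  have hval : C * ((x * Real.exp (-x) ^ 2 - 4 * (x + 1) * Real.exp (-x))
          + Real.exp (-x) * (x + 4 * (x - 1) * Real.exp x - x ^ 2))
        - C * ((0 * Real.exp (-0) ^ 2 - 4 * (0 + 1) * Real.exp (-0))
          + Real.exp (-x) * (0 + 4 * (0 - 1) * Real.exp 0 - 0 ^ 2))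
      = C * (4 * x - 3 * x * Real.exp (-x) - x ^ 2 * Real.exp (-x) + x * Real.exp (-x) ^ 2) := by
    simp only [neg_zero, Real.exp_zero]
    linear_combination (4 * (x - 1) * C) * hAB
  rw [hval]
  nlinarith [mul_nonneg (mul_nonneg (mul_nonneg hC hx) hA0.le) (by linarith : (0:ℝ) ≤ 1 - Real.exp (-x)),
    mul_nonneg (mul_nonneg (mul_nonneg hC hx) hx) hA0.le]

theorem stmt_5 (C : ℝ) (hC : 0 ≤ C) (f : ℝ → ℝ) (hf_meas : Measurable f)
    (hf : ∀ x : ℝ, 0 ≤ f x ∧ f x ≤ C) (L : ℝ) (hL : 0 ≤ L) :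
    Summable (fun k : ℕ => T^[k + 1] (fun x => Real.exp (-x) * f x) L) ∧
    (∑' k : ℕ, T^[k + 1] (fun x => Real.exp (-x) * f x) L) ≤ 2 * Real.exp 1 * C * L := by
  set g : ℝ → ℝ := fun x => Real.exp (-x) * f x with hg_def
  have hg_nice : Nice g := by
    refine ⟨(Real.measurable_exp.comp measurable_neg).mul hf_meas, C + 1, by linarith,
      fun y => ?_⟩
    have h0 : 0 ≤ g y := mul_nonneg (Real.exp_pos _).le (hf y).1
    rw [abs_of_nonneg h0]
    have h1 : Real.exp (-y) ≤ Real.exp ((C + 1) * |y|) :=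
      Real.exp_le_exp.2 (by nlinarith [neg_abs_le y, le_abs_self y, abs_nonneg y])
    have h2 : g y ≤ Real.exp (-y) * C :=
      mul_le_mul_of_nonneg_left (hf y).2 (Real.exp_pos _).le
    nlinarith [Real.exp_pos (-y), Real.exp_pos ((C + 1) * |y|)]
  have hu_nice : ∀ k : ℕ, Nice (T^[k] g) := by
    intro k
    induction k with
    | zero => simpa using hg_nice
    | succ k ih => rw [Function.iterate_succ_apply']; exact T_nice ih
  have hu_nonneg : ∀ k : ℕ, ∀ x : ℝ, 0 ≤ x → 0 ≤ T^[k] g x := by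
    intro k
    induction k with
    | zero => exact fun x _ => mul_nonneg (Real.exp_pos _).le (hf x).1
    | succ k ih =>
        intro x hx
        rw [Function.iterate_succ_apply']
        exact T_nonneg hx fun y hy => ih y hy.1
  have hsum : ∀ n : ℕ, ∀ x : ℝ, 0 ≤ x →
      (∑ k ∈ Finset.range n, T^[k + 1] g x) ≤ C * (4 * x - 2 * x * Real.exp (-x)) := by
    intro n
    induction n with
    | zero =>
        intro x hx
        simp only [Finset.range_zero, Finset.sum_empty]
        have h1 : Real.exp (-x) ≤ 1 := Real.exp_le_one_iff.2 (by linarith)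
        nlinarith [mul_nonneg hC hx,
          mul_nonneg (mul_nonneg hC hx) (by linarith : (0:ℝ) ≤ 1 - Real.exp (-x))]
    | succ n ih =>
        intro x hx
        have step : (∑ k ∈ Finset.range (n + 1), T^[k + 1] g x)
            = T (fun y => g y + ∑ k ∈ Finset.range n, T^[k + 1] g y) x := by
          calc (∑ k ∈ Finset.range (n + 1), T^[k + 1] g x)
              = ∑ k ∈ Finset.range (n + 1), T (T^[k] g) x :=
                Finset.sum_congr rfl fun k _ => by rw [Function.iterate_succ_apply']
            _ = T (fun y => ∑ k ∈ Finset.range (n + 1), T^[k] g y) x :=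
                (T_sum (fun k => hu_nice k) (n + 1) x).symm
            _ = T (fun y => g y + ∑ k ∈ Finset.range n, T^[k + 1] g y) x := by
                congr 1; funext y
                rw [Finset.sum_range_succ']
                simp only [Function.iterate_zero_apply]
                ring
        rw [step]
        have hmono : T (fun y => g y + ∑ k ∈ Finset.range n, T^[k + 1] g y) x
            ≤ T (fun y => C * Real.exp (-y) + C * (4 * y - 2 * y * Real.exp (-y))) x := by
          apply T_mono hx
          · exact ker_int (nice_add hg_nice (nice_sum (fun k => hu_nice (k + 1)) n)) x
          · exact (Continuous.intervalIntegrable (by continuity) 0 x)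
          · intro y hy
            have h1 : g y ≤ C * Real.exp (-y) := by
              have h2 := (hf y).2
              have h3 := (Real.exp_pos (-y)).le
              calc g y = Real.exp (-y) * f y := rfl
                _ ≤ Real.exp (-y) * C := mul_le_mul_of_nonneg_left h2 h3
                _ = C * Real.exp (-y) := mul_comm _ _
            have h2 := ih y hy.1
            linarith
        exact hmono.trans (key_ineq C hC hx)
  have hPhi : C * (4 * L - 2 * L * Real.exp (-L)) ≤ 2 * Real.exp 1 * C * L := by
    have h1 : (0:ℝ) < Real.exp (-L) := Real.exp_pos _
    have h2 : (2.7182818283 : ℝ) < Real.exp 1 := Real.exp_one_gt_d9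
    nlinarith [mul_nonneg hC hL]
  have ha : ∀ k : ℕ, 0 ≤ T^[k + 1] g L := fun k => hu_nonneg (k + 1) L hL
  have hb : ∀ n : ℕ, ∑ k ∈ Finset.range n, T^[k + 1] g L ≤ 2 * Real.exp 1 * C * L :=
    fun n => (hsum n L hL).trans hPhi
  exact ⟨summable_of_sum_range_le ha hb, Real.tsum_le_of_sum_range_le ha hb⟩
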